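/- Every generalized net is P_4-sparse: every set of five vertices induces at most one copy of the path P_4. -/
import Mathlib


/-- The generalized net: the complete graph `K n` on vertices `0, …, n-1` together with three
satellite vertices `n, n+1, n+2` attached by single edges to the distinct body vertices
`0, 1, 2` respectively. -/
def genNet (n : ℕ) : SimpleGraph (Fin (n + 3)) :=
  SimpleGraph.fromRel (fun i j =>
    ((i : ℕ) < n ∧ (j : ℕ) < n) ∨
    ((i : ℕ) = n ∧ (j : ℕ) = 0) ∨
    ((i : ℕ) = n + 1 ∧ (j : ℕ) = 1) ∨
    ((i : ℕ) = n + 2 ∧ (j : ℕ) = 2))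

open SimpleGraph Finset

private lemma pg_tri : ∀ a b c : Fin 4, (pathGraph 4).Adj a b → (pathGraph 4).Adj b c →
    (pathGraph 4).Adj a c → False := by
  simp only [pathGraph_adj]; decide

private lemma pg_deg : ∀ a : Fin 4, ∃ b, (pathGraph 4).Adj a b := by
  simp only [pathGraph_adj]; decide

/-- body vertex -/
private def bdy (n : ℕ) (i : Fin 3) : Fin (n + 3) := ⟨i, by have := i.isLt; omega⟩

/-- satellite vertex -/
private def st (n : ℕ) (i : Fin 3) : Fin (n + 3) := ⟨n + i, by have := i.isLt; omega⟩

private lemma sat_adj {n : ℕ} (hn : 3 ≤ n) {i : Fin 3} {y : Fin (n + 3)}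
    (h : (genNet n).Adj (st n i) y) : y = bdy n i := by
  rw [genNet, SimpleGraph.fromRel_adj] at h
  obtain ⟨hne, h⟩ := h
  have hi := i.isLt
  apply Fin.ext
  simp only [st, bdy] at h ⊢
  omega

private lemma bdy_adj {n : ℕ} {x y : Fin (n + 3)} (hx : (x : ℕ) < n) (hy : (y : ℕ) < n)
    (hxy : x ≠ y) : (genNet n).Adj x y := by
  rw [genNet, SimpleGraph.fromRel_adj]
  exact ⟨hxy, Or.inl (Or.inl ⟨hx, hy⟩)⟩

private lemma quad_card {n : ℕ} (hn : 3 ≤ n) {i j : Fin 3} (hij : i ≠ j) :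
    ({st n i, bdy n i, st n j, bdy n j} : Finset (Fin (n + 3))).card = 4 := by
  have hi := i.isLt; have hj := j.isLt
  have hij' : (i : ℕ) ≠ (j : ℕ) := by simpa [Fin.ext_iff] using hij
  rw [card_insert_of_notMem, card_insert_of_notMem, card_insert_of_notMem, card_singleton] <;>
    simp only [mem_insert, mem_singleton, st, bdy, Fin.ext_iff] <;> omega

private lemma classify {n : ℕ} (hn : 3 ≤ n) (T : Finset (Fin (n + 3))) (hT4 : T.card = 4)
    (e : (genNet n).induce (T : Set (Fin (n + 3))) ≃g pathGraph 4) :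
    ∃ i j : Fin 3, i ≠ j ∧ T = {st n i, bdy n i, st n j, bdy n j} := by
  -- every vertex of T has a neighbor in T
  have hdeg : ∀ x ∈ T, ∃ y ∈ T, (genNet n).Adj x y := by
    intro x hx
    obtain ⟨b, hb⟩ := pg_deg (e ⟨x, hx⟩)
    refine ⟨(e.symm b : (T : Set (Fin (n + 3)))), (e.symm b).2, ?_⟩
    have h2 : ((genNet n).induce (T : Set (Fin (n + 3)))).Adj ⟨x, hx⟩ (e.symm b) :=
      e.map_adj_iff.mp (by rwa [e.apply_symm_apply])
    simpa using h2
  -- T is triangle-free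
  have htri : ∀ a b c : Fin (n + 3), a ∈ T → b ∈ T → c ∈ T → (genNet n).Adj a b →
      (genNet n).Adj b c → (genNet n).Adj a c → False := by
    intro a b c ha hb hc h1 h2 h3
    exact pg_tri (e ⟨a, ha⟩) (e ⟨b, hb⟩) (e ⟨c, hc⟩)
      (e.map_adj_iff.mpr (by simpa using h1)) (e.map_adj_iff.mpr (by simpa using h2))
      (e.map_adj_iff.mpr (by simpa using h3))
  -- at most two body vertices
  have hTb : (T.filter (fun x : Fin (n+3) => (x : ℕ) < n)).card ≤ 2 := by
    by_contra h
    push_neg at h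
    obtain ⟨s, hs, hs3⟩ := Finset.exists_subset_card_eq (s := T.filter (fun x : Fin (n+3) => (x : ℕ) < n)) (n := 3) (by omega)
    obtain ⟨a, b, c, hab, hac, hbc, rfl⟩ := Finset.card_eq_three.mp hs3
    have ha := hs (by simp : a ∈ ({a, b, c} : Finset _))
    have hb := hs (by simp : b ∈ ({a, b, c} : Finset _))
    have hc := hs (by simp : c ∈ ({a, b, c} : Finset _))
    rw [mem_filter] at ha hb hc
    exact htri a b c ha.1 hb.1 hc.1 (bdy_adj ha.2 hb.2 hab) (bdy_adj hb.2 hc.2 hbc)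
      (bdy_adj ha.2 hc.2 hac)
  -- hence at least two satellites
  have hsplit := Finset.card_filter_add_card_filter_not (s := T)
    (p := fun x => (x : ℕ) < n)
  have hTs : 1 < (T.filter (fun x : Fin (n+3) => ¬ (x : ℕ) < n)).card := by omega
  obtain ⟨x₁, hx₁, x₂, hx₂, hx12⟩ := Finset.one_lt_card.mp hTs
  rw [mem_filter] at hx₁ hx₂
  -- identify the satellites
  have hsat : ∀ x ∈ T, ¬ (x : ℕ) < n → ∃ i : Fin 3, x = st n i ∧ bdy n i ∈ T := by
    intro x hx hxn
    have hlt := x.isLt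
    refine ⟨⟨(x : ℕ) - n, by omega⟩, by simp [st, Fin.ext_iff]; omega, ?_⟩
    obtain ⟨y, hy, hadj⟩ := hdeg x hx
    have hxst : x = st n ⟨(x : ℕ) - n, by omega⟩ := by simp [st, Fin.ext_iff]; omega
    rw [hxst] at hadj
    rw [← sat_adj hn hadj]; exact hy
  obtain ⟨i, rfl, hbi⟩ := hsat x₁ hx₁.1 hx₁.2
  obtain ⟨j, rfl, hbj⟩ := hsat x₂ hx₂.1 hx₂.2
  have hij : i ≠ j := fun h => hx12 (by rw [h])
  refine ⟨i, j, hij, ?_⟩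
  have hsub : ({st n i, bdy n i, st n j, bdy n j} : Finset (Fin (n + 3))) ⊆ T := by
    intro x hx
    simp only [mem_insert, mem_singleton] at hx
    rcases hx with rfl | rfl | rfl | rfl
    · exact hx₁.1
    · exact hbi
    · exact hx₂.1
    · exact hbj
  exact (Finset.eq_of_subset_of_card_le hsub (by rw [hT4, quad_card hn hij])).symm

private lemma six {n : ℕ} (S T : Finset (Fin (n + 3))) (hS : S.card = 5) (hTS : T ⊆ S)
    (hT : T.card = 4) (a b : Fin (n + 3)) (ha : a ∈ S) (hb : b ∈ S) (hab : a ≠ b)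
    (haT : a ∉ T) (hbT : b ∉ T) : False := by
  have hsub : insert a (insert b T) ⊆ S := by
    intro x hx
    simp only [mem_insert] at hx
    rcases hx with rfl | rfl | hx
    · exact ha
    · exact hb
    · exact hTS hx
  have hc := Finset.card_le_card hsub
  rw [Finset.card_insert_of_notMem (by simp [hab, haT]),
    Finset.card_insert_of_notMem hbT, hT, hS] at hc
  omega

private lemma st_notMem_quad {n : ℕ} (hn : 3 ≤ n) {i j m : Fin 3} (hmi : m ≠ i) (hmj : m ≠ j) :
    st n m ∉ ({st n i, bdy n i, st n j, bdy n j} : Finset (Fin (n + 3))) := by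
  have hi := i.isLt; have hj := j.isLt; have hm := m.isLt
  have h1 : (m : ℕ) ≠ (i : ℕ) := by simpa [Fin.ext_iff] using hmi
  have h2 : (m : ℕ) ≠ (j : ℕ) := by simpa [Fin.ext_iff] using hmj
  simp only [mem_insert, mem_singleton, st, bdy, Fin.ext_iff]
  omega

private lemma bdy_notMem_quad {n : ℕ} (hn : 3 ≤ n) {i j m : Fin 3} (hmi : m ≠ i) (hmj : m ≠ j) :
    bdy n m ∉ ({st n i, bdy n i, st n j, bdy n j} : Finset (Fin (n + 3))) := by
  have hi := i.isLt; have hj := j.isLt; have hm := m.isLt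
  have h1 : (m : ℕ) ≠ (i : ℕ) := by simpa [Fin.ext_iff] using hmi
  have h2 : (m : ℕ) ≠ (j : ℕ) := by simpa [Fin.ext_iff] using hmj
  simp only [mem_insert, mem_singleton, st, bdy, Fin.ext_iff]
  omega

private lemma st_ne_bdy {n : ℕ} (hn : 3 ≤ n) (i j : Fin 3) : st n i ≠ bdy n j := by
  have hi := i.isLt; have hj := j.isLt
  simp only [st, bdy, Fin.ext_iff, Fin.val_mk, ne_eq]
  omega

/-- Every generalized net is `P₄`-sparse: among any five of its vertices there is at most one
four-element subset inducing a path `P₄`. -/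
theorem genNet_P4sparse (n : ℕ) (hn : 3 ≤ n) (S : Finset (Fin (n + 3))) (hS : S.card = 5) :
    {T : Finset (Fin (n + 3)) | T ⊆ S ∧ T.card = 4 ∧
      Nonempty ((genNet n).induce (T : Set (Fin (n + 3))) ≃g SimpleGraph.pathGraph 4)}.Subsingleton := by
  rintro T1 ⟨hT1S, hT1c, ⟨e1⟩⟩ T2 ⟨hT2S, hT2c, ⟨e2⟩⟩
  obtain ⟨i, j, hij, rfl⟩ := classify hn T1 hT1c e1
  obtain ⟨k, l, hkl, rfl⟩ := classify hn T2 hT2c e2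
  -- if some index of T2 is not among {i, j}, we get 6 distinct vertices in S
  have extra : ∀ m : Fin 3, m ≠ i → m ≠ j →
      st n m ∈ S → bdy n m ∈ S → False := by
    intro m hmi hmj hs hb
    exact six S _ hS hT1S (quad_card hn hij) (st n m) (bdy n m) hs hb
      (st_ne_bdy hn m m) (st_notMem_quad hn hmi hmj) (bdy_notMem_quad hn hmi hmj)
  have hkS : st n k ∈ S := hT2S (by simp)
  have hbkS : bdy n k ∈ S := hT2S (by simp)
  have hlS : st n l ∈ S := hT2S (by simp)
  have hblS : bdy n l ∈ S := hT2S (by simp)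
  by_cases hk : k = i ∨ k = j
  · by_cases hl : l = i ∨ l = j
    · rcases hk with rfl | rfl <;> rcases hl with rfl | rfl
      · exact absurd rfl hkl
      · rfl
      · -- k = j, l = i : same set, reordered
        ext x
        simp only [mem_insert, mem_singleton]
        tauto
      · exact absurd rfl hkl
    · push_neg at hl
      exact absurd (extra l hl.1 hl.2 hlS hblS) (by simp)
  · push_neg at hk
    exact absurd (extra k hk.1 hk.2 hkS hbkS) (by simp)
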